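/- First-order convergence of the Local Linearization approximation to the variational equation with respect to the parameters: let X : ℝ → ℝ^{d×p} satisfy X(τ) = 0 and X′(t) = D_x f(t, x(t))·X(t) + B(t, x(t)) for t ∈ [τ, τ+T], and for a partition define Y₀ = 0 and Y_{n+1} = exp(hₙ·Aₙ)·Yₙ + ∫₀^{hₙ} exp((hₙ − u)·Aₙ)·Bₙ du, with Aₙ = D_x f(tₙ, yₙ), Bₙ = B(tₙ, yₙ), and yₙ the Local Linearization discretization (y₀ = s, y_{n+1} = yₙ + ∫₀^{hₙ} exp((hₙ − u)·Aₙ)·(f(tₙ,yₙ) + u·∂_t f(tₙ,yₙ)) du). Then there exist constants C > 0 and h₀ > 0 such that for every partition τ = t₀ < ... < t_N = τ+T with max_n hₙ ≤ h ≤ h₀, one has max_{0 ≤ n ≤ N} ‖X(tₙ) − Yₙ‖ ≤ C·h. -/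

import Mathlib

open Matrix

attribute [local instance] Matrix.seminormedAddCommGroup Matrix.normedAddCommGroup Matrix.normedSpace

set_option maxHeartbeats 2000000


section MatAux
variable {a b c : ℕ}

example : CompleteSpace (Matrix (Fin a) (Fin b) ℝ) := by infer_instance

lemma mnorm_mul_le (A : Matrix (Fin a) (Fin b) ℝ) (B : Matrix (Fin b) (Fin c) ℝ) :
    ‖A * B‖ ≤ b * ‖A‖ * ‖B‖ := by
  rw [Matrix.norm_le_iff (by positivity)]
  intro i j
  rw [Matrix.mul_apply]
  calc ‖∑ k, A i k * B k j‖ ≤ ∑ k : Fin b, ‖A i k * B k j‖ := norm_sum_le _ _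
    _ ≤ ∑ _k : Fin b, ‖A‖ * ‖B‖ := by
        refine Finset.sum_le_sum fun k _ => ?_
        rw [norm_mul]
        exact mul_le_mul (A.norm_entry_le_entrywise_sup_norm)
          (B.norm_entry_le_entrywise_sup_norm) (norm_nonneg _) (norm_nonneg _)
    _ = b * ‖A‖ * ‖B‖ := by simp [Finset.sum_const, mul_assoc]

lemma mnorm_mulVec_le (A : Matrix (Fin a) (Fin b) ℝ) (v : Fin b → ℝ) :
    ‖A.mulVec v‖ ≤ b * ‖A‖ * ‖v‖ := by
  rw [pi_norm_le_iff_of_nonneg (by positivity)]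
  intro i
  rw [Matrix.mulVec, dotProduct]
  calc ‖∑ k, A i k * v k‖ ≤ ∑ k : Fin b, ‖A i k * v k‖ := norm_sum_le _ _
    _ ≤ ∑ _k : Fin b, ‖A‖ * ‖v‖ := by
        refine Finset.sum_le_sum fun k _ => ?_
        rw [norm_mul]
        exact mul_le_mul (A.norm_entry_le_entrywise_sup_norm)
          (norm_le_pi_norm v k) (norm_nonneg _) (norm_nonneg _)
    _ = b * ‖A‖ * ‖v‖ := by simp [Finset.sum_const, mul_assoc]

lemma mnorm_one_le (hb : 0 < b) : ‖(1 : Matrix (Fin b) (Fin b) ℝ)‖ ≤ 1 := by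
  rw [Matrix.norm_le_iff (by norm_num)]
  intro i j
  rw [Matrix.one_apply]
  split <;> simp

lemma mnorm_pow_le (A : Matrix (Fin b) (Fin b) ℝ) (hb : 0 < b) (k : ℕ) :
    ‖A ^ k‖ ≤ (b * ‖A‖) ^ k := by
  induction k with
  | zero => simpa using mnorm_one_le hb
  | succ k ih =>
    rw [pow_succ']
    calc ‖A * A ^ k‖ ≤ b * ‖A‖ * ‖A ^ k‖ := mnorm_mul_le _ _
      _ ≤ (b * ‖A‖) * (b * ‖A‖) ^ k := by
          refine mul_le_mul_of_nonneg_left ih (by positivity)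
      _ = (b * ‖A‖) ^ (k + 1) := by ring

lemma msummable_exp (A : Matrix (Fin b) (Fin b) ℝ) (hb : 0 < b) :
    Summable (fun k : ℕ => ((k.factorial : ℝ))⁻¹ • A ^ k) := by
  refine Summable.of_norm_bounded (g := fun k => (b * ‖A‖) ^ k / k.factorial)
    (Real.summable_pow_div_factorial _) fun k => ?_
  rw [norm_smul, norm_inv, Real.norm_natCast]
  calc (↑k.factorial : ℝ)⁻¹ * ‖A ^ k‖ ≤ (↑k.factorial : ℝ)⁻¹ * (↑b * ‖A‖) ^ k :=
        mul_le_mul_of_nonneg_left (mnorm_pow_le A hb k) (by positivity)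
    _ = (↑b * ‖A‖) ^ k / k.factorial := by rw [div_eq_inv_mul]

end MatAux

section ExpAux
variable {b : ℕ}

-- assume previously proven:

lemma mnorm_coeff_le (A : Matrix (Fin b) (Fin b) ℝ) (hb : 0 < b) (k : ℕ) :
    ‖((k.factorial : ℝ))⁻¹ • A ^ k‖ ≤ (b * ‖A‖) ^ k / k.factorial := by
  rw [norm_smul, norm_inv, Real.norm_natCast]
  calc (↑k.factorial : ℝ)⁻¹ * ‖A ^ k‖ ≤ (↑k.factorial : ℝ)⁻¹ * (↑b * ‖A‖) ^ k :=
        mul_le_mul_of_nonneg_left (mnorm_pow_le A hb k) (by positivity)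
    _ = (↑b * ‖A‖) ^ k / k.factorial := by rw [div_eq_inv_mul]

lemma real_exp_tsum (r : ℝ) : ∑' k : ℕ, r ^ k / k.factorial = Real.exp r := by
  rw [Real.exp_eq_exp_ℝ, NormedSpace.exp_eq_tsum_div]

lemma msummable_norm_coeff (A : Matrix (Fin b) (Fin b) ℝ) (hb : 0 < b) :
    Summable (fun k : ℕ => ‖((k.factorial : ℝ))⁻¹ • A ^ k‖) :=
  Summable.of_nonneg_of_le (fun _ => norm_nonneg _) (mnorm_coeff_le A hb)
    (Real.summable_pow_div_factorial _)

lemma mnorm_exp_le (A : Matrix (Fin b) (Fin b) ℝ) (hb : 0 < b) :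
    ‖NormedSpace.exp A‖ ≤ Real.exp (b * ‖A‖) := by
  rw [show NormedSpace.exp A = ∑' k : ℕ, ((k.factorial : ℝ))⁻¹ • A ^ k from
    congrFun (NormedSpace.exp_eq_tsum ℝ) A]
  calc ‖∑' k : ℕ, ((k.factorial : ℝ))⁻¹ • A ^ k‖
      ≤ ∑' k : ℕ, ‖((k.factorial : ℝ))⁻¹ • A ^ k‖ :=
        norm_tsum_le_tsum_norm (msummable_norm_coeff A hb)
    _ ≤ ∑' k : ℕ, (b * ‖A‖) ^ k / k.factorial :=
        Summable.tsum_le_tsum (mnorm_coeff_le A hb) (msummable_norm_coeff A hb)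
          (Real.summable_pow_div_factorial _)
    _ = Real.exp (b * ‖A‖) := real_exp_tsum _

lemma mexp_split (A : Matrix (Fin b) (Fin b) ℝ) (hb : 0 < b) :
    NormedSpace.exp A = 1 + A + ∑' k : ℕ, ((k + 2).factorial : ℝ)⁻¹ • A ^ (k + 2) := by
  have hS := msummable_exp A hb
  have hS1 : Summable (fun k : ℕ => ((k + 1).factorial : ℝ)⁻¹ • A ^ (k + 1)) :=
    (summable_nat_add_iff 1).mpr hS
  rw [show NormedSpace.exp A = ∑' k : ℕ, ((k.factorial : ℝ))⁻¹ • A ^ k from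
    congrFun (NormedSpace.exp_eq_tsum ℝ) A]
  rw [hS.tsum_eq_zero_add, hS1.tsum_eq_zero_add]
  simp [Nat.factorial, add_assoc]

lemma mnorm_exp_sub_one_le (A : Matrix (Fin b) (Fin b) ℝ) (hb : 0 < b) :
    ‖NormedSpace.exp A - 1‖ ≤ (b * ‖A‖) * Real.exp (b * ‖A‖) := by
  set r := (b : ℝ) * ‖A‖ with hrdef
  have hr : 0 ≤ r := by positivity
  have key : NormedSpace.exp A - 1 = ∑' k : ℕ, ((k + 1).factorial : ℝ)⁻¹ • A ^ (k + 1) := by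
    have hS := msummable_exp A hb
    rw [show NormedSpace.exp A = ∑' k : ℕ, ((k.factorial : ℝ))⁻¹ • A ^ k from
      congrFun (NormedSpace.exp_eq_tsum ℝ) A]
    rw [hS.tsum_eq_zero_add]
    simp [Nat.factorial]
  rw [key]
  have hsum1 : Summable (fun k : ℕ => ‖((k + 1).factorial : ℝ)⁻¹ • A ^ (k + 1)‖) :=
    (summable_nat_add_iff 1).mpr (msummable_norm_coeff A hb)
  have hbnd : ∀ k : ℕ, ‖((k + 1).factorial : ℝ)⁻¹ • A ^ (k + 1)‖ ≤ r * (r ^ k / k.factorial) := by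
    intro k
    calc ‖((k + 1).factorial : ℝ)⁻¹ • A ^ (k + 1)‖ ≤ r ^ (k + 1) / (k + 1).factorial :=
          mnorm_coeff_le A hb (k + 1)
      _ ≤ r ^ (k + 1) / k.factorial := by
          gcongr
          omega
      _ = r * (r ^ k / k.factorial) := by rw [pow_succ]; ring
  calc ‖∑' k : ℕ, ((k + 1).factorial : ℝ)⁻¹ • A ^ (k + 1)‖
      ≤ ∑' k : ℕ, ‖((k + 1).factorial : ℝ)⁻¹ • A ^ (k + 1)‖ := norm_tsum_le_tsum_norm hsum1
    _ ≤ ∑' k : ℕ, r * (r ^ k / k.factorial) :=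
        Summable.tsum_le_tsum hbnd hsum1 (by exact (Real.summable_pow_div_factorial r).mul_left r)
    _ = r * ∑' k : ℕ, r ^ k / k.factorial := tsum_mul_left
    _ = r * Real.exp r := by rw [real_exp_tsum]

lemma mnorm_exp_sub_one_sub_le (A : Matrix (Fin b) (Fin b) ℝ) (hb : 0 < b) :
    ‖NormedSpace.exp A - 1 - A‖ ≤ (b * ‖A‖) ^ 2 * Real.exp (b * ‖A‖) := by
  set r := (b : ℝ) * ‖A‖ with hrdef
  have hr : 0 ≤ r := by positivity
  have key : NormedSpace.exp A - 1 - A = ∑' k : ℕ, ((k + 2).factorial : ℝ)⁻¹ • A ^ (k + 2) := by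
    rw [mexp_split A hb]; abel
  rw [key]
  have hsum1 : Summable (fun k : ℕ => ‖((k + 2).factorial : ℝ)⁻¹ • A ^ (k + 2)‖) :=
    (summable_nat_add_iff 2).mpr (msummable_norm_coeff A hb)
  have hbnd : ∀ k : ℕ, ‖((k + 2).factorial : ℝ)⁻¹ • A ^ (k + 2)‖ ≤ r ^ 2 * (r ^ k / k.factorial) := by
    intro k
    calc ‖((k + 2).factorial : ℝ)⁻¹ • A ^ (k + 2)‖ ≤ r ^ (k + 2) / (k + 2).factorial :=
          mnorm_coeff_le A hb (k + 2)
      _ ≤ r ^ (k + 2) / k.factorial := by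
          gcongr
          omega
      _ = r ^ 2 * (r ^ k / k.factorial) := by rw [pow_add]; ring
  calc ‖∑' k : ℕ, ((k + 2).factorial : ℝ)⁻¹ • A ^ (k + 2)‖
      ≤ ∑' k : ℕ, ‖((k + 2).factorial : ℝ)⁻¹ • A ^ (k + 2)‖ := norm_tsum_le_tsum_norm hsum1
    _ ≤ ∑' k : ℕ, r ^ 2 * (r ^ k / k.factorial) :=
        Summable.tsum_le_tsum hbnd hsum1 (by exact (Real.summable_pow_div_factorial r).mul_left _)
    _ = r ^ 2 * ∑' k : ℕ, r ^ k / k.factorial := tsum_mul_left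
    _ = r ^ 2 * Real.exp r := by rw [real_exp_tsum]

end ExpAux

section ContAux
variable {a b c : ℕ}


lemma continuousOn_exp_smul (A : Matrix (Fin b) (Fin b) ℝ) (hb : 0 < b) (R : ℝ) (hR : 0 ≤ R) :
    ContinuousOn (fun s : ℝ => NormedSpace.exp (s • A)) (Set.Icc (-R) R) := by
  have hfun : ∀ s : ℝ, NormedSpace.exp (s • A)
      = ∑' k : ℕ, (s ^ k * (k.factorial : ℝ)⁻¹) • A ^ k := by
    intro s
    rw [congrFun (NormedSpace.exp_eq_tsum ℝ) (s • A)]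
    congr 1; funext k
    rw [smul_pow, smul_smul, mul_comm]
  rw [continuousOn_iff_continuous_restrict]
  have heq : (Set.Icc (-R) R).restrict (fun s : ℝ => NormedSpace.exp (s • A))
      = fun s : Set.Icc (-R) R => ∑' k : ℕ, ((s : ℝ) ^ k * (k.factorial : ℝ)⁻¹) • A ^ k := by
    funext s; exact hfun s
  change Continuous ((Set.Icc (-R) R).restrict (fun s : ℝ => NormedSpace.exp (s • A)))
  rw [heq]
  apply continuous_tsum (u := fun k => (R * (b * ‖A‖)) ^ k / k.factorial)
  · intro k
    exact ((continuous_subtype_val.pow k).mul continuous_const).smul continuous_const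
  · exact Real.summable_pow_div_factorial _
  · rintro k ⟨s, hs⟩
    rw [norm_smul]
    have h1 : ‖(s : ℝ) ^ k * ((k.factorial : ℝ))⁻¹‖ ≤ R ^ k * ((k.factorial : ℝ))⁻¹ := by
      rw [norm_mul, norm_pow, norm_inv, Real.norm_natCast, Real.norm_eq_abs]
      have : |s| ≤ R := abs_le.mpr hs
      gcongr
    calc ‖(s:ℝ) ^ k * ((k.factorial : ℝ))⁻¹‖ * ‖A ^ k‖
        ≤ (R ^ k * ((k.factorial : ℝ))⁻¹) * (b * ‖A‖) ^ k := by
          exact mul_le_mul h1 (mnorm_pow_le A hb k) (norm_nonneg _) (by positivity)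
      _ = (R * (b * ‖A‖)) ^ k / k.factorial := by rw [mul_pow]; ring

lemma continuous_mulVec_pair :
    Continuous fun q : (Matrix (Fin a) (Fin b) ℝ) × (Fin b → ℝ) => q.1.mulVec q.2 := by
  apply continuous_pi; intro i
  show Continuous fun q : (Matrix (Fin a) (Fin b) ℝ) × (Fin b → ℝ) => ∑ k, q.1 i k * q.2 k
  apply continuous_finset_sum; intro k _
  exact ((continuous_apply k).comp ((continuous_apply i).comp continuous_fst)).mul
    ((continuous_apply k).comp continuous_snd)

lemma continuous_matMul_right (Bc : Matrix (Fin b) (Fin c) ℝ) :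
    Continuous fun P : Matrix (Fin a) (Fin b) ℝ => P * Bc := by
  apply continuous_pi; intro i
  apply continuous_pi; intro j
  show Continuous fun P : Matrix (Fin a) (Fin b) ℝ => ∑ k, P i k * Bc k j
  apply continuous_finset_sum; intro k _
  fun_prop

end ContAux

section Gronwall

lemma t_mono (N : ℕ) (t : ℕ → ℝ) (ht : ∀ n < N, t n ≤ t (n + 1)) :
    ∀ m n, m ≤ n → n ≤ N → t m ≤ t n := by
  intro m n hmn hnN
  induction n with
  | zero => obtain rfl : m = 0 := by omega
            exact le_refl _
  | succ n ih =>
    rcases Nat.eq_or_lt_of_le hmn with h | h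
    · rw [h]
    · exact le_trans (ih (by omega) (by omega)) (ht n (by omega))

lemma discrete_gronwall' (L K : ℝ) (hL : 0 ≤ L) (hK : 0 ≤ K) (N : ℕ) (t : ℕ → ℝ) (e : ℕ → ℝ)
    (ht : ∀ n < N, t n ≤ t (n + 1)) (he0 : e 0 = 0) (hpos : ∀ n, 0 ≤ e n)
    (hstep : ∀ n < N, e (n + 1) ≤ (1 + L * (t (n + 1) - t n)) * e n + K * (t (n + 1) - t n)) :
    ∀ n ≤ N, e n ≤ K * (t n - t 0) * Real.exp (L * (t n - t 0)) := by
  intro n hn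
  induction n with
  | zero => simp [he0]
  | succ n ih =>
    have hn' : n < N := by omega
    have ihn := ih (by omega)
    have hs : 0 ≤ t n - t 0 := sub_nonneg.mpr (t_mono N t ht 0 n (by omega) (by omega))
    have hh : 0 ≤ t (n + 1) - t n := sub_nonneg.mpr (ht n hn')
    set s := t n - t 0 with hsdef
    set hh' := t (n + 1) - t n with hhdef
    have hsplit : t (n + 1) - t 0 = s + hh' := by rw [hsdef, hhdef]; ring
    rw [hsplit]
    have hexp1 : (1 : ℝ) + L * hh' ≤ Real.exp (L * hh') := by
      have := Real.add_one_le_exp (L * hh')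
      linarith
    have hE : Real.exp (L * (s + hh')) = Real.exp (L * s) * Real.exp (L * hh') := by
      rw [← Real.exp_add]; ring_nf
    have hone : (1 : ℝ) ≤ Real.exp (L * (s + hh')) :=
      Real.one_le_exp (by positivity)
    calc e (n + 1) ≤ (1 + L * hh') * e n + K * hh' := hstep n hn'
      _ ≤ Real.exp (L * hh') * e n + K * hh' := by
          exact add_le_add_left (mul_le_mul_of_nonneg_right hexp1 (hpos n)) _
      _ ≤ Real.exp (L * hh') * (K * s * Real.exp (L * s)) + K * hh' := by
          refine add_le_add_left (mul_le_mul_of_nonneg_left ihn (Real.exp_nonneg _)) _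
      _ = K * s * Real.exp (L * (s + hh')) + K * hh' * 1 := by rw [hE]; ring
      _ ≤ K * s * Real.exp (L * (s + hh')) + K * hh' * Real.exp (L * (s + hh')) := by
          refine add_le_add_right (mul_le_mul_of_nonneg_left hone (by positivity)) _
      _ = K * (s + hh') * Real.exp (L * (s + hh')) := by ring
end Gronwall

section FAux
variable {d : ℕ}

lemma norm_inr_le : ‖ContinuousLinearMap.inr ℝ ℝ (Fin d → ℝ)‖ ≤ 1 := by
  refine ContinuousLinearMap.opNorm_le_bound _ zero_le_one fun v => by
    simp [Prod.norm_def]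

lemma hasFDerivAt_partial (f : ℝ → (Fin d → ℝ) → Fin d → ℝ)
    (hf : ContDiff ℝ 2 (Function.uncurry f)) (t : ℝ) (y : Fin d → ℝ) :
    HasFDerivAt (f t) ((fderiv ℝ (Function.uncurry f) (t, y)).comp
      (ContinuousLinearMap.inr ℝ ℝ (Fin d → ℝ))) y := by
  have h1 : HasFDerivAt (Function.uncurry f) (fderiv ℝ (Function.uncurry f) (t, y)) (t, y) :=
    (hf.differentiable (by norm_num) (t, y)).hasFDerivAt
  exact h1.comp y (hasFDerivAt_prodMk_right t y)

lemma fderiv_partial (f : ℝ → (Fin d → ℝ) → Fin d → ℝ)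
    (hf : ContDiff ℝ 2 (Function.uncurry f)) (t : ℝ) (y : Fin d → ℝ) :
    fderiv ℝ (f t) y = (fderiv ℝ (Function.uncurry f) (t, y)).comp
      (ContinuousLinearMap.inr ℝ ℝ (Fin d → ℝ)) :=
  (hasFDerivAt_partial f hf t y).fderiv

lemma norm_fderiv_partial_le (f : ℝ → (Fin d → ℝ) → Fin d → ℝ)
    (hf : ContDiff ℝ 2 (Function.uncurry f)) {M : ℝ}
    (hM : ∀ q : ℝ × (Fin d → ℝ), ‖fderiv ℝ (Function.uncurry f) q‖ ≤ M)
    (t : ℝ) (y : Fin d → ℝ) : ‖fderiv ℝ (f t) y‖ ≤ M := by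
  have hM0 : 0 ≤ M := le_trans (norm_nonneg _) (hM (t, y))
  rw [fderiv_partial f hf t y]
  calc ‖(fderiv ℝ (Function.uncurry f) (t, y)).comp (ContinuousLinearMap.inr ℝ ℝ (Fin d → ℝ))‖
      ≤ ‖fderiv ℝ (Function.uncurry f) (t, y)‖ * ‖ContinuousLinearMap.inr ℝ ℝ (Fin d → ℝ)‖ :=
        ContinuousLinearMap.opNorm_comp_le _ _
    _ ≤ M * 1 := mul_le_mul (hM _) norm_inr_le (norm_nonneg _) hM0
    _ = M := mul_one M

lemma prod_norm_le_add (q q' : ℝ × (Fin d → ℝ)) :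
    ‖q - q'‖ ≤ |q.1 - q'.1| + ‖q.2 - q'.2‖ := by
  rw [Prod.norm_def]
  have h1 : ‖(q - q').1‖ = |q.1 - q'.1| := rfl
  have h2 : (q - q').2 = q.2 - q'.2 := rfl
  rw [h1, h2]
  exact max_le (le_add_of_nonneg_right (norm_nonneg _)) (le_add_of_nonneg_left (abs_nonneg _))

lemma uncurry_lipschitz (f : ℝ → (Fin d → ℝ) → Fin d → ℝ)
    (hf : ContDiff ℝ 2 (Function.uncurry f)) {M : ℝ}
    (hM : ∀ q : ℝ × (Fin d → ℝ), ‖fderiv ℝ (Function.uncurry f) q‖ ≤ M)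
    (t t' : ℝ) (a a' : Fin d → ℝ) :
    ‖f t a - f t' a'‖ ≤ M * (|t - t'| + ‖a - a'‖) := by
  have h := Convex.norm_image_sub_le_of_norm_fderiv_le (𝕜 := ℝ)
    (f := Function.uncurry f) (s := Set.univ)
    (fun q _ => (hf.differentiable (by norm_num)).differentiableAt)
    (fun q _ => hM q) convex_univ (Set.mem_univ (t', a')) (Set.mem_univ (t, a))
  have hM0 : 0 ≤ M := le_trans (norm_nonneg _) (hM (t, a))
  calc ‖f t a - f t' a'‖ = ‖Function.uncurry f (t, a) - Function.uncurry f (t', a')‖ := rfl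
    _ ≤ M * ‖(t, a) - (t', a')‖ := h
    _ ≤ M * (|t - t'| + ‖a - a'‖) := by
        refine mul_le_mul_of_nonneg_left ?_ hM0
        exact prod_norm_le_add (t, a) (t', a')

lemma fderiv_partial_lipschitz (f : ℝ → (Fin d → ℝ) → Fin d → ℝ)
    (hf : ContDiff ℝ 2 (Function.uncurry f)) {M : ℝ}
    (hM : ∀ q : ℝ × (Fin d → ℝ), ‖fderiv ℝ (fderiv ℝ (Function.uncurry f)) q‖ ≤ M)
    (t t' : ℝ) (a a' : Fin d → ℝ) :
    ‖fderiv ℝ (f t) a - fderiv ℝ (f t') a'‖ ≤ M * (|t - t'| + ‖a - a'‖) := by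
  have hM0 : 0 ≤ M := by have := hM (t, a); exact le_trans (ContinuousLinearMap.opNorm_nonneg _) this
  have hd1 : ContDiff ℝ 1 (fderiv ℝ (Function.uncurry f)) := by
    exact (hf.fderiv_right (m := 1) (by norm_num))
  have h := Convex.norm_image_sub_le_of_norm_fderiv_le (𝕜 := ℝ)
    (f := fderiv ℝ (Function.uncurry f)) (s := Set.univ)
    (fun q _ => (hd1.differentiable (by norm_num)).differentiableAt)
    (fun q _ => hM q) convex_univ (Set.mem_univ (t', a')) (Set.mem_univ (t, a))
  rw [fderiv_partial f hf t a, fderiv_partial f hf t' a', ← ContinuousLinearMap.sub_comp]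
  have hcomp : ‖(fderiv ℝ (Function.uncurry f) (t, a)
        - fderiv ℝ (Function.uncurry f) (t', a')).comp
        (ContinuousLinearMap.inr ℝ ℝ (Fin d → ℝ))‖
      ≤ ‖fderiv ℝ (Function.uncurry f) (t, a) - fderiv ℝ (Function.uncurry f) (t', a')‖ := by
    refine le_trans (ContinuousLinearMap.opNorm_comp_le _ _) ?_
    refine le_trans (mul_le_mul_of_nonneg_left norm_inr_le (norm_nonneg _)) ?_
    rw [mul_one]
  refine le_trans hcomp (le_trans h ?_)
  exact mul_le_mul_of_nonneg_left (prod_norm_le_add (t, a) (t', a')) hM0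

lemma hasDerivAt_time (f : ℝ → (Fin d → ℝ) → Fin d → ℝ)
    (hf : ContDiff ℝ 2 (Function.uncurry f)) (t : ℝ) (a : Fin d → ℝ) :
    HasDerivAt (fun τ' => f τ' a) ((fderiv ℝ (Function.uncurry f) (t, a)) (1, 0)) t := by
  have h1 : HasFDerivAt (Function.uncurry f) (fderiv ℝ (Function.uncurry f) (t, a)) (t, a) :=
    (hf.differentiable (by norm_num) (t, a)).hasFDerivAt
  have h2 : HasDerivAt (fun τ' : ℝ => (τ', a)) ((1 : ℝ), (0 : Fin d → ℝ)) t :=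
    (hasDerivAt_id t).prodMk (hasDerivAt_const t a)
  exact h1.comp_hasDerivAt t h2

lemma norm_deriv_time_le (f : ℝ → (Fin d → ℝ) → Fin d → ℝ)
    (hf : ContDiff ℝ 2 (Function.uncurry f)) {M : ℝ}
    (hM : ∀ q : ℝ × (Fin d → ℝ), ‖fderiv ℝ (Function.uncurry f) q‖ ≤ M)
    (t : ℝ) (a : Fin d → ℝ) : ‖deriv (fun τ' => f τ' a) t‖ ≤ M := by
  rw [(hasDerivAt_time f hf t a).deriv]
  calc ‖(fderiv ℝ (Function.uncurry f) (t, a)) (1, 0)‖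
      ≤ ‖fderiv ℝ (Function.uncurry f) (t, a)‖ * ‖((1 : ℝ), (0 : Fin d → ℝ))‖ :=
        ContinuousLinearMap.le_opNorm _ _
    _ ≤ M * 1 := by
        refine mul_le_mul (hM _) ?_ (norm_nonneg _) (le_trans (norm_nonneg _) (hM (t, a)))
        rw [Prod.norm_def]
        simp
    _ = M := mul_one M

lemma norm_toMatrix'_le {d' : ℕ} (L : (Fin d → ℝ) →L[ℝ] (Fin d' → ℝ)) :
    ‖(LinearMap.toMatrix' (↑L : (Fin d → ℝ) →ₗ[ℝ] Fin d' → ℝ) : Matrix (Fin d') (Fin d) ℝ)‖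
      ≤ ‖L‖ := by
  rw [Matrix.norm_le_iff (norm_nonneg L)]
  intro i j
  rw [LinearMap.toMatrix'_apply]
  rw [show (Pi.single j 1 : Fin d → ℝ) = fun j' => if j' = j then (1:ℝ) else 0 from by
    ext j'; simp [Pi.single_apply]]
  have hv : ‖(fun j' : Fin d => if j' = j then (1 : ℝ) else 0)‖ ≤ 1 := by
    rw [pi_norm_le_iff_of_nonneg zero_le_one]
    intro k; split <;> simp
  calc ‖(↑L : (Fin d → ℝ) →ₗ[ℝ] Fin d' → ℝ) (fun j' => if j' = j then (1:ℝ) else 0) i‖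
      ≤ ‖L (fun j' => if j' = j then (1:ℝ) else 0)‖ := norm_le_pi_norm _ i
    _ ≤ ‖L‖ * 1 := by
        refine le_trans (L.le_opNorm _) (mul_le_mul_of_nonneg_left hv (norm_nonneg _))
    _ = ‖L‖ := mul_one _

lemma mulVec_toMatrix' (L : (Fin d → ℝ) →L[ℝ] (Fin d → ℝ)) (v : Fin d → ℝ) :
    (LinearMap.toMatrix' (↑L : (Fin d → ℝ) →ₗ[ℝ] Fin d → ℝ)).mulVec v = L v := by
  rw [← Matrix.toLin'_apply, Matrix.toLin'_toMatrix']
  rfl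

end FAux

section More
variable {a b c d : ℕ}

lemma continuous_matMul_pair :
    Continuous fun q : (Matrix (Fin a) (Fin b) ℝ) × (Matrix (Fin b) (Fin c) ℝ) =>
      q.1 * q.2 := by
  apply continuous_pi; intro i
  apply continuous_pi; intro j
  show Continuous fun q : (Matrix (Fin a) (Fin b) ℝ) × (Matrix (Fin b) (Fin c) ℝ) =>
    ∑ k, q.1 i k * q.2 k j
  apply continuous_finset_sum; intro k _
  fun_prop

lemma continuous_PhiMat :
    Continuous (fun L : (ℝ × (Fin d → ℝ)) →L[ℝ] (Fin d → ℝ) =>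
      (LinearMap.toMatrix' (↑(L.comp (ContinuousLinearMap.inr ℝ ℝ (Fin d → ℝ))) :
        (Fin d → ℝ) →ₗ[ℝ] Fin d → ℝ) : Matrix (Fin d) (Fin d) ℝ)) := by
  apply continuous_pi; intro i
  apply continuous_pi; intro j
  simp only [LinearMap.toMatrix'_apply, ContinuousLinearMap.coe_coe,
    ContinuousLinearMap.comp_apply, ContinuousLinearMap.inr_apply]
  exact (continuous_apply i).comp
    (ContinuousLinearMap.apply ℝ (Fin d → ℝ)
      ((0 : ℝ), Pi.single j 1)).continuous

lemma uncurry_lipschitz_gen {E : Type*} [NormedAddCommGroup E] [NormedSpace ℝ E]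
    (g : ℝ → (Fin d → ℝ) → E) (hg : ContDiff ℝ 1 (Function.uncurry g)) {M : ℝ}
    (hM : ∀ q : ℝ × (Fin d → ℝ), ‖fderiv ℝ (Function.uncurry g) q‖ ≤ M)
    (t t' : ℝ) (a a' : Fin d → ℝ) :
    ‖g t a - g t' a'‖ ≤ M * (|t - t'| + ‖a - a'‖) := by
  have hM0 : 0 ≤ M := le_trans (norm_nonneg _) (hM (t, a))
  have h := Convex.norm_image_sub_le_of_norm_fderiv_le (𝕜 := ℝ)
    (f := Function.uncurry g) (s := Set.univ)
    (fun q _ => (hg.differentiable (by norm_num)).differentiableAt)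
    (fun q _ => hM q) convex_univ (Set.mem_univ (t', a')) (Set.mem_univ (t, a))
  calc ‖g t a - g t' a'‖ = ‖Function.uncurry g (t, a) - Function.uncurry g (t', a')‖ := rfl
    _ ≤ M * ‖(t, a) - (t', a')‖ := h
    _ ≤ M * (|t - t'| + ‖a - a'‖) := by
        refine mul_le_mul_of_nonneg_left ?_ hM0
        have h1 : ‖((t, a) - (t', a')).1‖ = |t - t'| := rfl
        have h2 : ((t, a) - (t', a')).2 = a - a' := rfl
        rw [Prod.norm_def, h1, h2]
        exact max_le (le_add_of_nonneg_right (norm_nonneg _))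
          (le_add_of_nonneg_left (abs_nonneg _))
end More

section Extra
variable {b : ℕ}

lemma mnorm_exp_smul_sub_one_le (A : Matrix (Fin b) (Fin b) ℝ) (hb : 0 < b)
    {M s : ℝ} (hA : ‖A‖ ≤ M) (hs : 0 ≤ s) (hs1 : s ≤ 1) :
    ‖NormedSpace.exp (s • A) - 1‖ ≤ s * (b * M * Real.exp (b * M)) := by
  have hM0 : 0 ≤ M := le_trans (norm_nonneg _) hA
  have h1 := mnorm_exp_sub_one_le (s • A) hb
  have hsn : ‖s • A‖ = s * ‖A‖ := by rw [norm_smul, Real.norm_eq_abs, abs_of_nonneg hs]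
  have hr1 : (b : ℝ) * ‖s • A‖ ≤ b * (s * M) := by
    rw [hsn]
    exact mul_le_mul_of_nonneg_left (mul_le_mul_of_nonneg_left hA hs) (by positivity)
  have hr2 : (b : ℝ) * ‖s • A‖ ≤ b * M := le_trans hr1 (mul_le_mul_of_nonneg_left (by nlinarith : s * M ≤ M) (Nat.cast_nonneg b))
  calc ‖NormedSpace.exp (s • A) - 1‖ ≤ (b * ‖s • A‖) * Real.exp (b * ‖s • A‖) := h1
    _ ≤ (b * (s * M)) * Real.exp (b * M) :=
        mul_le_mul hr1 (Real.exp_le_exp.mpr hr2) (Real.exp_nonneg _) (by positivity)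
    _ = s * (b * M * Real.exp (b * M)) := by ring

lemma mnorm_exp_smul_sub_one_sub_le (A : Matrix (Fin b) (Fin b) ℝ) (hb : 0 < b)
    {M s : ℝ} (hA : ‖A‖ ≤ M) (hs : 0 ≤ s) (hs1 : s ≤ 1) :
    ‖NormedSpace.exp (s • A) - 1 - s • A‖ ≤ s ^ 2 * ((b * M) ^ 2 * Real.exp (b * M)) := by
  have hM0 : 0 ≤ M := le_trans (norm_nonneg _) hA
  have h1 := mnorm_exp_sub_one_sub_le (s • A) hb
  have hsn : ‖s • A‖ = s * ‖A‖ := by rw [norm_smul, Real.norm_eq_abs, abs_of_nonneg hs]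
  have hr1 : (b : ℝ) * ‖s • A‖ ≤ b * (s * M) := by
    rw [hsn]
    exact mul_le_mul_of_nonneg_left (mul_le_mul_of_nonneg_left hA hs) (by positivity)
  have hr2 : (b : ℝ) * ‖s • A‖ ≤ b * M := le_trans hr1 (mul_le_mul_of_nonneg_left (by nlinarith : s * M ≤ M) (Nat.cast_nonneg b))
  calc ‖NormedSpace.exp (s • A) - 1 - s • A‖
      ≤ (b * ‖s • A‖) ^ 2 * Real.exp (b * ‖s • A‖) := h1
    _ ≤ (b * (s * M)) ^ 2 * Real.exp (b * M) := by
        refine mul_le_mul ?_ (Real.exp_le_exp.mpr hr2) (Real.exp_nonneg _) (by positivity)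
        exact pow_le_pow_left₀ (by positivity) hr1 2
    _ = s ^ 2 * ((b * M) ^ 2 * Real.exp (b * M)) := by ring

end Extra

/-- Abbreviation for the Jacobian matrix used in the schemes. -/
noncomputable def Amat (d : ℕ) (f : ℝ → (Fin d → ℝ) → Fin d → ℝ) (u : ℝ) (v : Fin d → ℝ) :
    Matrix (Fin d) (Fin d) ℝ :=
  LinearMap.toMatrix' (↑(fderiv ℝ (f u) v) : (Fin d → ℝ) →ₗ[ℝ] Fin d → ℝ)

lemma Amat_def (d : ℕ) (f : ℝ → (Fin d → ℝ) → Fin d → ℝ) (u : ℝ) (v : Fin d → ℝ) :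
    Amat d f u v
      = LinearMap.toMatrix' (↑(fderiv ℝ (f u) v) : (Fin d → ℝ) →ₗ[ℝ] Fin d → ℝ) := rfl


noncomputable def matENormedAddMonoid (m n : Type*) [Fintype m] [Fintype n] :
    ENormedAddMonoid (Matrix m n ℝ) :=
  NormedAddCommGroup.toENormedAddCommMonoid.toENormedAddMonoid

attribute [local instance] matENormedAddMonoid

noncomputable instance matrixCLMNorm {E : Type*} [SeminormedAddCommGroup E] [NormedSpace ℝ E]
    (m n : Type*) [Fintype m] [Fintype n] : Norm (E →L[ℝ] Matrix m n ℝ) :=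
  ContinuousLinearMap.hasOpNorm

set_option maxHeartbeats 40000000 in
/-- First-order convergence of the Local Linearization approximation to the
variational equation with respect to the parameters: with
`X′(t) = D_x f(t, x(t))·X(t) + B(t, x(t))`, `X(τ) = 0`, and the LL
discretization `Y₀ = 0`, `Y_{n+1} = exp(hₙAₙ)Yₙ + ∫₀^{hₙ} exp((hₙ−u)Aₙ)·Bₙ du`,
one has `max_n ‖X(tₙ) − Yₙ‖ ≤ C·h`. -/
theorem local_linearization_variational_parameter_convergence
    (d p : ℕ) (hd : 0 < d) (hp : 0 < p)
    (f : ℝ → (Fin d → ℝ) → Fin d → ℝ)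
    (hf : ContDiff ℝ 2 (Function.uncurry f))
    (hbound : ∃ M : ℝ, ∀ q : ℝ × (Fin d → ℝ),
        ‖Function.uncurry f q‖ ≤ M ∧
        ‖fderiv ℝ (Function.uncurry f) q‖ ≤ M ∧
        ‖fderiv ℝ (fderiv ℝ (Function.uncurry f)) q‖ ≤ M)
    (B : ℝ → (Fin d → ℝ) → Matrix (Fin d) (Fin p) ℝ)
    (hB : ContDiff ℝ 1 (Function.uncurry B))
    (hBbound : ∃ MB : ℝ, ∀ q : ℝ × (Fin d → ℝ),
        ‖Function.uncurry B q‖ ≤ MB ∧ ‖fderiv ℝ (Function.uncurry B) q‖ ≤ MB)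
    (τ T : ℝ) (hT : 0 < T) (s : Fin d → ℝ)
    (x : ℝ → Fin d → ℝ) (hx₀ : x τ = s)
    (hx : ∀ t ∈ Set.Icc τ (τ + T), HasDerivAt x (f t (x t)) t)
    (X : ℝ → Matrix (Fin d) (Fin p) ℝ)
    (hX₀ : X τ = 0)
    (hX : ∀ t ∈ Set.Icc τ (τ + T), HasDerivAt X
        ((LinearMap.toMatrix' (↑(fderiv ℝ (f t) (x t)) :
            (Fin d → ℝ) →ₗ[ℝ] Fin d → ℝ)) * X t + B t (x t)) t) :
    ∃ C > (0 : ℝ), ∃ h₀ > (0 : ℝ), ∀ h : ℝ, h ≤ h₀ →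
      ∀ N : ℕ, 0 < N → ∀ t : ℕ → ℝ,
        t 0 = τ → t N = τ + T →
        (∀ n < N, t n < t (n + 1)) →
        (∀ n < N, t (n + 1) - t n ≤ h) →
        ∀ y : ℕ → Fin d → ℝ, y 0 = s →
        (∀ n < N, y (n + 1) = y n + ∫ u in (0 : ℝ)..(t (n + 1) - t n),
            (NormedSpace.exp ((t (n + 1) - t n - u) •
                LinearMap.toMatrix' (↑(fderiv ℝ (f (t n)) (y n)) :
                  (Fin d → ℝ) →ₗ[ℝ] Fin d → ℝ))).mulVec
              (f (t n) (y n) + u • deriv (fun τ' => f τ' (y n)) (t n))) →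
        ∀ Y : ℕ → Matrix (Fin d) (Fin p) ℝ, Y 0 = 0 →
        (∀ n < N, Y (n + 1) = NormedSpace.exp ((t (n + 1) - t n) •
            LinearMap.toMatrix' (↑(fderiv ℝ (f (t n)) (y n)) :
              (Fin d → ℝ) →ₗ[ℝ] Fin d → ℝ)) * Y n +
          ∫ u in (0 : ℝ)..(t (n + 1) - t n),
            NormedSpace.exp ((t (n + 1) - t n - u) •
              LinearMap.toMatrix' (↑(fderiv ℝ (f (t n)) (y n)) :
                (Fin d → ℝ) →ₗ[ℝ] Fin d → ℝ)) * B (t n) (y n)) →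
        ∀ n ≤ N, ‖X (t n) - Y n‖ ≤ C * h := by
  classical
  obtain ⟨M, hM⟩ := hbound
  obtain ⟨MB, hMB⟩ := hBbound
  have hM0 : 0 ≤ M := le_trans (norm_nonneg _) (hM (0, 0)).1
  have hMB0 : 0 ≤ MB := le_trans (norm_nonneg _) (hMB (0, 0)).1
  have hd1 : (1 : ℝ) ≤ d := by exact_mod_cast hd
  have hd0 : (0 : ℝ) ≤ d := by linarith
  simp only [← Amat_def d f] at hX
  set EC : ℝ := d * M * Real.exp (d * M) with hECdef
  have hEC0 : 0 ≤ EC := by rw [hECdef]; positivity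
  set EC2 : ℝ := (d * M) ^ 2 * Real.exp (d * M) with hEC2def
  have hEC20 : 0 ≤ EC2 := by rw [hEC2def]; positivity
  set Cy : ℝ := 2 * d * M * EC + M with hCydef
  have hCy0 : 0 ≤ Cy := by
    rw [hCydef]
    have := mul_nonneg (mul_nonneg (mul_nonneg (by norm_num : (0:ℝ) ≤ 2) hd0) hM0) hEC0
    linarith
  set Cx : ℝ := M * (1 + M) with hCxdef
  have hCx0 : 0 ≤ Cx := by
    rw [hCxdef]
    have := mul_nonneg hM0 (by linarith : (0:ℝ) ≤ 1 + M)
    linarith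
  set C₁ : ℝ := (Cx + Cy) * T * Real.exp (M * T) with hC1def
  have hC10 : 0 ≤ C₁ := by
    rw [hC1def]
    exact mul_nonneg (mul_nonneg (add_nonneg hCx0 hCy0) hT.le) (Real.exp_nonneg _)
  set KX : ℝ := (MB + 1) * Real.exp ((d * M + 1) * T) with hKXdef
  have hKX0 : 0 ≤ KX := by
    rw [hKXdef]
    exact mul_nonneg (by linarith) (Real.exp_nonneg _)
  set LX : ℝ := d * M * KX + MB with hLXdef
  have hLX0 : 0 ≤ LX := by
    rw [hLXdef]
    have := mul_nonneg (mul_nonneg hd0 hM0) hKX0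
    linarith
  set C₃ : ℝ := d * M * (1 + M + C₁) * KX + d * M * LX + MB * (1 + M + C₁) with hC3def
  have hC30 : 0 ≤ C₃ := by
    rw [hC3def]
    have p1 := mul_nonneg (mul_nonneg (mul_nonneg hd0 hM0) (by linarith : (0:ℝ) ≤ 1 + M + C₁)) hKX0
    have p2 := mul_nonneg (mul_nonneg hd0 hM0) hLX0
    have p3 := mul_nonneg hMB0 (by linarith : (0:ℝ) ≤ 1 + M + C₁)
    linarith
  set CR : ℝ := C₃ + d * EC2 * KX + d * EC * MB with hCRdef
  have hCR0 : 0 ≤ CR := by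
    rw [hCRdef]
    have p2 := mul_nonneg (mul_nonneg hd0 hEC20) hKX0
    have p3 := mul_nonneg (mul_nonneg hd0 hEC0) hMB0
    linarith
  set L2 : ℝ := d * EC with hL2def
  have hL20 : 0 ≤ L2 := by rw [hL2def]; exact mul_nonneg hd0 hEC0
  have hCfin0 : 0 ≤ CR * T * Real.exp (L2 * T) :=
    mul_nonneg (mul_nonneg hCR0 hT.le) (Real.exp_nonneg _)
  refine ⟨CR * T * Real.exp (L2 * T) + 1, by linarith, 1, one_pos, ?_⟩
  intro h hh1 N hN t ht0 htN hts hth y hy0 hyrec Y hY0 hYrec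
  simp only [← Amat_def d f] at hyrec hYrec
  have hmono' : ∀ n < N, t n ≤ t (n + 1) := fun n hn => (hts n hn).le
  have htmono := t_mono N t hmono'
  have hh0 : 0 < h := lt_of_lt_of_le (sub_pos.mpr (hts 0 hN)) (hth 0 hN)
  have htmem : ∀ n ≤ N, t n ∈ Set.Icc τ (τ + T) := by
    intro n hn
    constructor
    · rw [← ht0]; exact htmono 0 n (Nat.zero_le n) hn
    · rw [← htN]; exact htmono n N hn le_rfl
  have htT : ∀ n ≤ N, t n - t 0 ≤ T := by
    intro n hn
    have := (htmem n hn).2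
    rw [ht0]
    linarith
  have htT0 : ∀ n ≤ N, 0 ≤ t n - t 0 := fun n hn => sub_nonneg.mpr (htmono 0 n (Nat.zero_le n) hn)
  have hstep_le1 : ∀ n < N, t (n + 1) - t n ≤ 1 := fun n hn => le_trans (hth n hn) hh1
  have hstep_nn : ∀ n < N, 0 ≤ t (n + 1) - t n := fun n hn => sub_nonneg.mpr (hmono' n hn)
  -- basic solution facts
  have hxc : ContinuousOn x (Set.Icc τ (τ + T)) :=
    fun u hu => (hx u hu).continuousAt.continuousWithinAt
  have hXc : ContinuousOn X (Set.Icc τ (τ + T)) :=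
    fun u hu => (hX u hu).continuousAt.continuousWithinAt
  have hxlip : ∀ a ∈ Set.Icc τ (τ + T), ∀ b ∈ Set.Icc τ (τ + T), ‖x b - x a‖ ≤ M * |b - a| := by
    intro a ha b hb
    have := Convex.norm_image_sub_le_of_norm_hasDerivWithin_le (𝕜 := ℝ)
      (f := x) (f' := fun u => f u (x u)) (s := Set.Icc τ (τ + T)) (C := M)
      (fun u hu => (hx u hu).hasDerivWithinAt) (fun u hu => (hM (u, x u)).1)
      (convex_Icc _ _) ha hb
    simpa [Real.norm_eq_abs] using this
  have hAnorm : ∀ u v, ‖Amat d f u v‖ ≤ M := fun u v =>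
    le_trans (norm_toMatrix'_le _) (norm_fderiv_partial_le f hf (fun q => (hM q).2.1) u v)
  have hAdiff : ∀ u u' v v', ‖Amat d f u v - Amat d f u' v'‖ ≤ M * (|u - u'| + ‖v - v'‖) := by
    intro u u' v v'
    have heq : Amat d f u v - Amat d f u' v'
        = LinearMap.toMatrix' (↑(fderiv ℝ (f u) v - fderiv ℝ (f u') v') :
            (Fin d → ℝ) →ₗ[ℝ] Fin d → ℝ) := by
      simp only [Amat_def, ContinuousLinearMap.coe_sub, map_sub]
    rw [heq]
    exact le_trans (norm_toMatrix'_le _)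
      (fderiv_partial_lipschitz f hf (fun q => (hM q).2.2) u u' v v')
  have hK1 : (0:ℝ) < d * M + 1 := by nlinarith [mul_nonneg hd0 hM0]
  have hXbound : ∀ u ∈ Set.Icc τ (τ + T), ‖X u‖ ≤ KX := by
    have hbd : ∀ v ∈ Set.Ico τ (τ + T),
        ‖Amat d f v (x v) * X v + B v (x v)‖ ≤ (d * M + 1) * ‖X v‖ + (MB + 1) := by
      intro v hv
      have h1 : ‖Amat d f v (x v) * X v‖ ≤ d * M * ‖X v‖ := by
        refine le_trans (mnorm_mul_le _ _) ?_
        have h1a : (d:ℝ) * ‖Amat d f v (x v)‖ ≤ d * M :=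
          mul_le_mul_of_nonneg_left (hAnorm v (x v)) hd0
        exact mul_le_mul_of_nonneg_right h1a (norm_nonneg _)
      have h2 : ‖B v (x v)‖ ≤ MB := (hMB (v, x v)).1
      have h3 := norm_add_le (Amat d f v (x v) * X v) (B v (x v))
      nlinarith [norm_nonneg (X v)]
    intro u hu
    have hg := norm_le_gronwallBound_of_norm_deriv_right_le (δ := 0) (K := d * M + 1)
      (ε := MB + 1) hXc
      (fun v hv => (hX v (Set.Ico_subset_Icc_self hv)).hasDerivWithinAt)
      (by rw [hX₀]; simp) hbd u hu
    refine le_trans hg ?_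
    rw [gronwallBound_of_K_ne_0 (ne_of_gt hK1)]
    simp only []
    have hq0 : (0:ℝ) ≤ (MB + 1) / (d * M + 1) := div_nonneg (by linarith) hK1.le
    have hq : (MB + 1) / (d * M + 1) ≤ MB + 1 := div_le_self (by linarith) (by nlinarith [mul_nonneg hd0 hM0])
    have hEe : Real.exp ((d * M + 1) * (u - τ)) ≤ Real.exp ((d * M + 1) * T) :=
      Real.exp_le_exp.mpr (mul_le_mul_of_nonneg_left (by linarith [hu.2]) hK1.le)
    rw [hKXdef]
    nlinarith [Real.exp_pos ((d * M + 1) * (u - τ)),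
      mul_le_mul hq hEe (Real.exp_pos _).le (by linarith)]
  have hXlip : ∀ a ∈ Set.Icc τ (τ + T), ∀ b ∈ Set.Icc τ (τ + T),
      ‖X b - X a‖ ≤ LX * |b - a| := by
    have hbd : ∀ u ∈ Set.Icc τ (τ + T),
        ‖Amat d f u (x u) * X u + B u (x u)‖ ≤ LX := by
      intro u hu
      have h1 : ‖Amat d f u (x u) * X u‖ ≤ d * M * KX := by
        refine le_trans (mnorm_mul_le _ _) ?_
        have h1a : (d:ℝ) * ‖Amat d f u (x u)‖ ≤ d * M :=
          mul_le_mul_of_nonneg_left (hAnorm u (x u)) hd0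
        exact mul_le_mul h1a (hXbound u hu) (norm_nonneg _) (mul_nonneg hd0 hM0)
      have h2 : ‖B u (x u)‖ ≤ MB := (hMB (u, x u)).1
      have h3 := norm_add_le (Amat d f u (x u) * X u) (B u (x u))
      rw [hLXdef]
      linarith
    intro a ha b hb
    have := Convex.norm_image_sub_le_of_norm_hasDerivWithin_le (𝕜 := ℝ)
      (f := X) (f' := fun u => Amat d f u (x u) * X u + B u (x u))
      (s := Set.Icc τ (τ + T)) (C := LX)
      (fun u hu => (hX u hu).hasDerivWithinAt) hbd (convex_Icc _ _) ha hb
    simpa [Real.norm_eq_abs] using this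
  -- continuity of integrands
  have hfxc : ContinuousOn (fun u => f u (x u)) (Set.Icc τ (τ + T)) :=
    hf.continuous.comp_continuousOn (continuousOn_id.prodMk hxc)
  have hAc : ContinuousOn (fun u => Amat d f u (x u)) (Set.Icc τ (τ + T)) := by
    have h1 : ContinuousOn (fun u => fderiv ℝ (Function.uncurry f) (u, x u))
        (Set.Icc τ (τ + T)) :=
      (hf.continuous_fderiv (by norm_num)).comp_continuousOn (continuousOn_id.prodMk hxc)
    refine (continuous_PhiMat.comp_continuousOn h1).congr ?_
    intro u hu
    simp only [Function.comp_apply, Amat_def]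
    rw [fderiv_partial f hf]
  have hBxc : ContinuousOn (fun u => B u (x u)) (Set.Icc τ (τ + T)) :=
    hB.continuous.comp_continuousOn (continuousOn_id.prodMk hxc)
  have hXintc : ContinuousOn (fun u => Amat d f u (x u) * X u + B u (x u))
      (Set.Icc τ (τ + T)) :=
    (continuous_matMul_pair.comp_continuousOn (hAc.prodMk hXc)).add hBxc
  -- first-order convergence of the state scheme y
  have hC1bound : ∀ n ≤ N, ‖x (t n) - y n‖ ≤ C₁ * h := by
    have heystep : ∀ n < N, ‖x (t (n + 1)) - y (n + 1)‖
        ≤ (1 + M * (t (n + 1) - t n)) * ‖x (t n) - y n‖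
          + ((Cx + Cy) * h) * (t (n + 1) - t n) := by
      intro n hn
      have hab : t n ≤ t (n + 1) := hmono' n hn
      have hnn : 0 ≤ t (n + 1) - t n := hstep_nn n hn
      have hle1 : t (n + 1) - t n ≤ 1 := hstep_le1 n hn
      have hleh : t (n + 1) - t n ≤ h := hth n hn
      have hmema : t n ∈ Set.Icc τ (τ + T) := htmem n (le_of_lt hn)
      have hmemb : t (n + 1) ∈ Set.Icc τ (τ + T) := htmem (n + 1) hn
      have hsub : Set.Icc (t n) (t (n + 1)) ⊆ Set.Icc τ (τ + T) :=
        Set.Icc_subset_Icc hmema.1 hmemb.2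
      have huIcc : Set.uIcc (t n) (t (n + 1)) = Set.Icc (t n) (t (n + 1)) := Set.uIcc_of_le hab
      have huIoc : Set.uIoc (t n) (t (n + 1)) = Set.Ioc (t n) (t (n + 1)) := Set.uIoc_of_le hab
      -- FTC for x
      have hxint : IntervalIntegrable (fun u => f u (x u)) MeasureTheory.volume
          (t n) (t (n + 1)) := by
        apply ContinuousOn.intervalIntegrable
        rw [huIcc]; exact hfxc.mono hsub
      have hFTCx : ∫ u in (t n)..(t (n + 1)), f u (x u) = x (t (n + 1)) - x (t n) :=
        intervalIntegral.integral_eq_sub_of_hasDerivAt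
          (fun u hu => hx u (hsub (huIcc ▸ hu))) hxint
      have hconsx : ‖x (t (n + 1)) - x (t n) - (t (n + 1) - t n) • f (t n) (x (t n))‖
          ≤ Cx * ((t (n + 1) - t n) * h) := by
        have heq : x (t (n + 1)) - x (t n) - (t (n + 1) - t n) • f (t n) (x (t n))
            = ∫ u in (t n)..(t (n + 1)), (f u (x u) - f (t n) (x (t n))) := by
          rw [intervalIntegral.integral_sub hxint intervalIntegrable_const,
            hFTCx, intervalIntegral.integral_const]
        rw [heq]
        have hbnd : ∀ u ∈ Set.uIoc (t n) (t (n + 1)),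
            ‖f u (x u) - f (t n) (x (t n))‖ ≤ Cx * (t (n + 1) - t n) := by
          intro u hu
          rw [huIoc] at hu
          have humem : u ∈ Set.Icc τ (τ + T) := hsub ⟨hu.1.le, hu.2⟩
          have h1 := uncurry_lipschitz_gen f (hf.of_le one_le_two)
            (fun q => (hM q).2.1) u (t n) (x u) (x (t n))
          have h2 := hxlip (t n) hmema u humem
          have habs : |u - t n| ≤ t (n + 1) - t n := by
            rw [abs_of_nonneg (by linarith [hu.1.le])]
            linarith [hu.2]
          have h3 : |u - t n| + ‖x u - x (t n)‖
              ≤ (t (n + 1) - t n) + M * (t (n + 1) - t n) := by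
            have := le_trans h2 (mul_le_mul_of_nonneg_left habs hM0)
            linarith
          calc ‖f u (x u) - f (t n) (x (t n))‖
              ≤ M * (|u - t n| + ‖x u - x (t n)‖) := h1
            _ ≤ M * ((t (n + 1) - t n) + M * (t (n + 1) - t n)) :=
                mul_le_mul_of_nonneg_left h3 hM0
            _ = Cx * (t (n + 1) - t n) := by rw [hCxdef]; ring
        refine le_trans (intervalIntegral.norm_integral_le_of_norm_le_const hbnd) ?_
        rw [abs_of_nonneg hnn]
        have h4 := mul_le_mul_of_nonneg_left hleh (mul_nonneg hCx0 hnn)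
        calc Cx * (t (n + 1) - t n) * (t (n + 1) - t n)
            ≤ Cx * (t (n + 1) - t n) * h := h4
          _ = Cx * ((t (n + 1) - t n) * h) := by ring
      -- the y-step
      have hAn : ‖Amat d f (t n) (y n)‖ ≤ M := hAnorm _ _
      have hexpc : ContinuousOn
          (fun u => NormedSpace.exp ((t (n + 1) - t n - u) • Amat d f (t n) (y n)))
          (Set.uIcc 0 (t (n + 1) - t n)) := by
        refine (continuousOn_exp_smul (Amat d f (t n) (y n)) hd 1 zero_le_one).comp
          ((continuous_const.sub continuous_id).continuousOn) ?_
        intro u hu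
        rw [Set.uIcc_of_le hnn] at hu
        constructor
        · show (-1:ℝ) ≤ t (n + 1) - t n - u
          linarith [hu.1, hu.2]
        · show t (n + 1) - t n - u ≤ (1:ℝ)
          linarith [hu.1, hu.2]
      have hvc : Continuous (fun u : ℝ =>
          f (t n) (y n) + u • deriv (fun τ' => f τ' (y n)) (t n)) :=
        continuous_const.add (continuous_id.smul continuous_const)
      have hGc : ContinuousOn (fun u =>
          (NormedSpace.exp ((t (n + 1) - t n - u) • Amat d f (t n) (y n))).mulVec
            (f (t n) (y n) + u • deriv (fun τ' => f τ' (y n)) (t n)))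
          (Set.uIcc 0 (t (n + 1) - t n)) :=
        continuous_mulVec_pair.comp_continuousOn (hexpc.prodMk hvc.continuousOn)
      have hGint : IntervalIntegrable (fun u =>
          (NormedSpace.exp ((t (n + 1) - t n - u) • Amat d f (t n) (y n))).mulVec
            (f (t n) (y n) + u • deriv (fun τ' => f τ' (y n)) (t n)))
          MeasureTheory.volume 0 (t (n + 1) - t n) := hGc.intervalIntegrable
      have hconsy : ‖y (n + 1) - y n - (t (n + 1) - t n) • f (t n) (y n)‖
          ≤ Cy * ((t (n + 1) - t n) * h) := by
        rw [hyrec n hn]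
        have heq : y n + (∫ u in (0:ℝ)..(t (n + 1) - t n),
              (NormedSpace.exp ((t (n + 1) - t n - u) • Amat d f (t n) (y n))).mulVec
                (f (t n) (y n) + u • deriv (fun τ' => f τ' (y n)) (t n)))
            - y n - (t (n + 1) - t n) • f (t n) (y n)
            = ∫ u in (0:ℝ)..(t (n + 1) - t n),
              ((NormedSpace.exp ((t (n + 1) - t n - u) • Amat d f (t n) (y n))).mulVec
                (f (t n) (y n) + u • deriv (fun τ' => f τ' (y n)) (t n))
                - f (t n) (y n)) := by
          rw [intervalIntegral.integral_sub hGint intervalIntegrable_const,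
            intervalIntegral.integral_const, sub_zero]
          abel
        rw [heq]
        have hfn : ‖f (t n) (y n)‖ ≤ M := (hM ((t n), y n)).1
        have hdn : ‖deriv (fun τ' => f τ' (y n)) (t n)‖ ≤ M :=
          norm_deriv_time_le f hf (fun q => (hM q).2.1) (t n) (y n)
        have hbnd : ∀ u ∈ Set.uIoc (0:ℝ) (t (n + 1) - t n),
            ‖(NormedSpace.exp ((t (n + 1) - t n - u) • Amat d f (t n) (y n))).mulVec
                (f (t n) (y n) + u • deriv (fun τ' => f τ' (y n)) (t n))
                - f (t n) (y n)‖ ≤ (t (n + 1) - t n) * Cy := by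
          intro u hu
          rw [Set.uIoc_of_le hnn] at hu
          have hu0 : 0 < u := hu.1
          have hu1 : u ≤ t (n + 1) - t n := hu.2
          have hid : (NormedSpace.exp ((t (n + 1) - t n - u) • Amat d f (t n) (y n))).mulVec
                (f (t n) (y n) + u • deriv (fun τ' => f τ' (y n)) (t n))
                - f (t n) (y n)
              = (NormedSpace.exp ((t (n + 1) - t n - u) • Amat d f (t n) (y n)) - 1).mulVec
                (f (t n) (y n) + u • deriv (fun τ' => f τ' (y n)) (t n))
                + u • deriv (fun τ' => f τ' (y n)) (t n) := by
            rw [Matrix.sub_mulVec, Matrix.one_mulVec]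
            abel
          rw [hid]
          have hE1 : ‖NormedSpace.exp ((t (n + 1) - t n - u) • Amat d f (t n) (y n)) - 1‖
              ≤ (t (n + 1) - t n) * EC := by
            refine le_trans (mnorm_exp_smul_sub_one_le (Amat d f (t n) (y n)) hd hAn
              (s := t (n + 1) - t n - u) (by linarith) (by linarith)) ?_
            rw [hECdef]
            refine mul_le_mul_of_nonneg_right (by linarith) ?_
            positivity
          have hw : ‖f (t n) (y n) + u • deriv (fun τ' => f τ' (y n)) (t n)‖ ≤ 2 * M := by
            refine le_trans (norm_add_le _ _) ?_
            rw [norm_smul, Real.norm_eq_abs, abs_of_nonneg hu0.le]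
            nlinarith
          have huf : ‖u • deriv (fun τ' => f τ' (y n)) (t n)‖ ≤ (t (n + 1) - t n) * M := by
            rw [norm_smul, Real.norm_eq_abs, abs_of_nonneg hu0.le]
            exact mul_le_mul hu1 hdn (norm_nonneg _) hnn
          calc ‖(NormedSpace.exp ((t (n + 1) - t n - u) • Amat d f (t n) (y n)) - 1).mulVec
                (f (t n) (y n) + u • deriv (fun τ' => f τ' (y n)) (t n))
                + u • deriv (fun τ' => f τ' (y n)) (t n)‖
              ≤ ‖(NormedSpace.exp ((t (n + 1) - t n - u) • Amat d f (t n) (y n)) - 1).mulVec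
                  (f (t n) (y n) + u • deriv (fun τ' => f τ' (y n)) (t n))‖
                + ‖u • deriv (fun τ' => f τ' (y n)) (t n)‖ := norm_add_le _ _
            _ ≤ d * ‖NormedSpace.exp ((t (n + 1) - t n - u) • Amat d f (t n) (y n)) - 1‖
                  * ‖f (t n) (y n) + u • deriv (fun τ' => f τ' (y n)) (t n)‖
                + (t (n + 1) - t n) * M := add_le_add (mnorm_mulVec_le _ _) huf
            _ ≤ d * (((t (n + 1) - t n) * EC) * (2 * M)) + (t (n + 1) - t n) * M := by
                have h5 : ‖NormedSpace.exp ((t (n + 1) - t n - u) • Amat d f (t n) (y n)) - 1‖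
                    * ‖f (t n) (y n) + u • deriv (fun τ' => f τ' (y n)) (t n)‖
                    ≤ ((t (n + 1) - t n) * EC) * (2 * M) :=
                  mul_le_mul hE1 hw (norm_nonneg _) (mul_nonneg hnn hEC0)
                have h6 := mul_le_mul_of_nonneg_left h5 hd0
                calc (d:ℝ) * ‖NormedSpace.exp ((t (n + 1) - t n - u) • Amat d f (t n) (y n)) - 1‖
                      * ‖f (t n) (y n) + u • deriv (fun τ' => f τ' (y n)) (t n)‖
                      + (t (n + 1) - t n) * M
                    = (d:ℝ) * (‖NormedSpace.exp ((t (n + 1) - t n - u) • Amat d f (t n) (y n)) - 1‖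
                      * ‖f (t n) (y n) + u • deriv (fun τ' => f τ' (y n)) (t n)‖)
                      + (t (n + 1) - t n) * M := by ring
                  _ ≤ (d:ℝ) * (((t (n + 1) - t n) * EC) * (2 * M)) + (t (n + 1) - t n) * M := by
                      linarith
            _ = (t (n + 1) - t n) * Cy := by rw [hCydef]; ring
        refine le_trans (intervalIntegral.norm_integral_le_of_norm_le_const hbnd) ?_
        rw [sub_zero, abs_of_nonneg hnn]
        calc (t (n + 1) - t n) * Cy * (t (n + 1) - t n)
            ≤ (t (n + 1) - t n) * Cy * h :=
              mul_le_mul_of_nonneg_left hleh (mul_nonneg hnn hCy0)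
          _ = Cy * ((t (n + 1) - t n) * h) := by ring
      -- combine
      have hfl : ‖f (t n) (x (t n)) - f (t n) (y n)‖ ≤ M * ‖x (t n) - y n‖ := by
        have := uncurry_lipschitz_gen f (hf.of_le one_le_two)
          (fun q => (hM q).2.1) (t n) (t n) (x (t n)) (y n)
        simpa using this
      have hident : x (t (n + 1)) - y (n + 1) =
          (x (t (n + 1)) - x (t n) - (t (n + 1) - t n) • f (t n) (x (t n)))
          - (y (n + 1) - y n - (t (n + 1) - t n) • f (t n) (y n))
          + (x (t n) - y n)
          + ((t (n + 1) - t n) • (f (t n) (x (t n)) - f (t n) (y n))) := by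
        rw [smul_sub]
        abel
      have hlast : ‖(t (n + 1) - t n) • (f (t n) (x (t n)) - f (t n) (y n))‖
          ≤ (t (n + 1) - t n) * (M * ‖x (t n) - y n‖) := by
        rw [norm_smul, Real.norm_eq_abs, abs_of_nonneg hnn]
        exact mul_le_mul_of_nonneg_left hfl hnn
      calc ‖x (t (n + 1)) - y (n + 1)‖
          = ‖(x (t (n + 1)) - x (t n) - (t (n + 1) - t n) • f (t n) (x (t n)))
            - (y (n + 1) - y n - (t (n + 1) - t n) • f (t n) (y n))
            + (x (t n) - y n)
            + ((t (n + 1) - t n) • (f (t n) (x (t n)) - f (t n) (y n)))‖ := by rw [← hident]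
        _ ≤ ‖(x (t (n + 1)) - x (t n) - (t (n + 1) - t n) • f (t n) (x (t n)))
            - (y (n + 1) - y n - (t (n + 1) - t n) • f (t n) (y n))
            + (x (t n) - y n)‖
            + ‖(t (n + 1) - t n) • (f (t n) (x (t n)) - f (t n) (y n))‖ := norm_add_le _ _
        _ ≤ ‖(x (t (n + 1)) - x (t n) - (t (n + 1) - t n) • f (t n) (x (t n)))
            - (y (n + 1) - y n - (t (n + 1) - t n) • f (t n) (y n))‖
            + ‖x (t n) - y n‖
            + ‖(t (n + 1) - t n) • (f (t n) (x (t n)) - f (t n) (y n))‖ := by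
            have := norm_add_le ((x (t (n + 1)) - x (t n) - (t (n + 1) - t n) • f (t n) (x (t n)))
              - (y (n + 1) - y n - (t (n + 1) - t n) • f (t n) (y n))) (x (t n) - y n)
            linarith
        _ ≤ ‖x (t (n + 1)) - x (t n) - (t (n + 1) - t n) • f (t n) (x (t n))‖
            + ‖y (n + 1) - y n - (t (n + 1) - t n) • f (t n) (y n)‖
            + ‖x (t n) - y n‖
            + ‖(t (n + 1) - t n) • (f (t n) (x (t n)) - f (t n) (y n))‖ := by
            have := norm_sub_le (x (t (n + 1)) - x (t n) - (t (n + 1) - t n) • f (t n) (x (t n)))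
              (y (n + 1) - y n - (t (n + 1) - t n) • f (t n) (y n))
            linarith
        _ ≤ Cx * ((t (n + 1) - t n) * h) + Cy * ((t (n + 1) - t n) * h)
            + ‖x (t n) - y n‖ + (t (n + 1) - t n) * (M * ‖x (t n) - y n‖) := by
            linarith
        _ ≤ (1 + M * (t (n + 1) - t n)) * ‖x (t n) - y n‖
            + ((Cx + Cy) * h) * (t (n + 1) - t n) := by nlinarith []
    have hey0 : ‖x (t 0) - y 0‖ = 0 := by rw [ht0, hx₀, hy0]; simp
    have hey := discrete_gronwall' M ((Cx + Cy) * h) hM0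
      (mul_nonneg (add_nonneg hCx0 hCy0) hh0.le) N t
      (fun n => ‖x (t n) - y n‖) hmono' hey0 (fun n => norm_nonneg _) heystep
    intro n hn
    refine le_trans (hey n hn) ?_
    have h1 : t n - t 0 ≤ T := htT n hn
    have h2 : 0 ≤ t n - t 0 := htT0 n hn
    have h3 : Real.exp (M * (t n - t 0)) ≤ Real.exp (M * T) :=
      Real.exp_le_exp.mpr (mul_le_mul_of_nonneg_left h1 hM0)
    have h4 : (0:ℝ) < Real.exp (M * (t n - t 0)) := Real.exp_pos _
    calc (Cx + Cy) * h * (t n - t 0) * Real.exp (M * (t n - t 0))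
        ≤ (Cx + Cy) * h * T * Real.exp (M * (t n - t 0)) :=
          mul_le_mul_of_nonneg_right
            (mul_le_mul_of_nonneg_left h1 (mul_nonneg (add_nonneg hCx0 hCy0) hh0.le)) h4.le
      _ ≤ (Cx + Cy) * h * T * Real.exp (M * T) :=
          mul_le_mul_of_nonneg_left h3
            (mul_nonneg (mul_nonneg (add_nonneg hCx0 hCy0) hh0.le) hT.le)
      _ = C₁ * h := by rw [hC1def]; ring
  -- one-step estimate for the matrix scheme
  have hEYstep : ∀ n < N, ‖X (t (n + 1)) - Y (n + 1)‖
      ≤ (1 + L2 * (t (n + 1) - t n)) * ‖X (t n) - Y n‖ + (CR * h) * (t (n + 1) - t n) := by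
    intro n hn
    have hab : t n ≤ t (n + 1) := hmono' n hn
    have hnn : 0 ≤ t (n + 1) - t n := hstep_nn n hn
    have hle1 : t (n + 1) - t n ≤ 1 := hstep_le1 n hn
    have hleh : t (n + 1) - t n ≤ h := hth n hn
    have hmema : t n ∈ Set.Icc τ (τ + T) := htmem n (le_of_lt hn)
    have hmemb : t (n + 1) ∈ Set.Icc τ (τ + T) := htmem (n + 1) hn
    have hsub : Set.Icc (t n) (t (n + 1)) ⊆ Set.Icc τ (τ + T) :=
      Set.Icc_subset_Icc hmema.1 hmemb.2
    have huIcc : Set.uIcc (t n) (t (n + 1)) = Set.Icc (t n) (t (n + 1)) := Set.uIcc_of_le hab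
    have huIoc : Set.uIoc (t n) (t (n + 1)) = Set.Ioc (t n) (t (n + 1)) := Set.uIoc_of_le hab
    have hAn : ‖Amat d f (t n) (y n)‖ ≤ M := hAnorm _ _
    have hBnb : ‖B (t n) (y n)‖ ≤ MB := (hMB ((t n), (y n))).1
    have hXtn : ‖X (t n)‖ ≤ KX := hXbound _ hmema
    -- FTC for X
    have hXint2 : IntervalIntegrable (fun u => Amat d f u (x u) * X u + B u (x u))
        MeasureTheory.volume (t n) (t (n + 1)) := by
      apply ContinuousOn.intervalIntegrable
      rw [huIcc]; exact hXintc.mono hsub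
    have hFTCX : ∫ u in (t n)..(t (n + 1)), (Amat d f u (x u) * X u + B u (x u))
        = X (t (n + 1)) - X (t n) :=
      intervalIntegral.integral_eq_sub_of_hasDerivAt
        (fun u hu => hX u (hsub (huIcc ▸ hu))) hXint2
    -- T1 : consistency of the Euler part for X
    have hT1 : ‖X (t (n + 1)) - X (t n)
        - (t (n + 1) - t n) • (Amat d f (t n) (y n) * X (t n) + B (t n) (y n))‖
        ≤ C₃ * h * (t (n + 1) - t n) := by
      have heq : X (t (n + 1)) - X (t n)
          - (t (n + 1) - t n) • (Amat d f (t n) (y n) * X (t n) + B (t n) (y n))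
          = ∫ u in (t n)..(t (n + 1)), (Amat d f u (x u) * X u + B u (x u)
              - (Amat d f (t n) (y n) * X (t n) + B (t n) (y n))) := by
        rw [intervalIntegral.integral_sub hXint2 intervalIntegrable_const,
          hFTCX, intervalIntegral.integral_const]
      rw [heq]
      have hbnd : ∀ u ∈ Set.uIoc (t n) (t (n + 1)),
          ‖Amat d f u (x u) * X u + B u (x u)
            - (Amat d f (t n) (y n) * X (t n) + B (t n) (y n))‖ ≤ C₃ * h := by
        intro u hu
        rw [huIoc] at hu
        have humem : u ∈ Set.Icc τ (τ + T) := hsub ⟨hu.1.le, hu.2⟩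
        have habs : |u - t n| ≤ t (n + 1) - t n := by
          rw [abs_of_nonneg (by linarith [hu.1.le])]
          linarith [hu.2]
        have habs' : |u - t n| ≤ h := le_trans habs hleh
        have hxy : ‖x u - y n‖ ≤ M * h + C₁ * h := by
          have h2 := hxlip (t n) hmema u humem
          have h3 := hC1bound n (le_of_lt hn)
          have htr : x u - y n = (x u - x (t n)) + (x (t n) - y n) := by abel
          rw [htr]
          refine le_trans (norm_add_le _ _) ?_
          have := mul_le_mul_of_nonneg_left habs' hM0
          linarith
        have hAdiffb : ‖Amat d f u (x u) - Amat d f (t n) (y n)‖ ≤ M * (1 + M + C₁) * h := by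
          refine le_trans (hAdiff u (t n) (x u) (y n)) ?_
          have hsum : |u - t n| + ‖x u - y n‖ ≤ h + (M * h + C₁ * h) := add_le_add habs' hxy
          calc M * (|u - t n| + ‖x u - y n‖) ≤ M * (h + (M * h + C₁ * h)) :=
              mul_le_mul_of_nonneg_left hsum hM0
            _ = M * (1 + M + C₁) * h := by ring
        have hBdiffb : ‖B u (x u) - B (t n) (y n)‖ ≤ MB * (1 + M + C₁) * h := by
          refine le_trans (uncurry_lipschitz_gen B hB (fun q => (hMB q).2) u (t n) (x u) (y n)) ?_
          have hsum : |u - t n| + ‖x u - y n‖ ≤ h + (M * h + C₁ * h) := add_le_add habs' hxy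
          calc MB * (|u - t n| + ‖x u - y n‖) ≤ MB * (h + (M * h + C₁ * h)) :=
              mul_le_mul_of_nonneg_left hsum hMB0
            _ = MB * (1 + M + C₁) * h := by ring
        have hXu : ‖X u‖ ≤ KX := hXbound u humem
        have hXd : ‖X u - X (t n)‖ ≤ LX * h := by
          refine le_trans (hXlip (t n) hmema u humem) ?_
          exact mul_le_mul_of_nonneg_left habs' hLX0
        have hsplit1 : Amat d f u (x u) * X u - Amat d f (t n) (y n) * X (t n)
            = (Amat d f u (x u) - Amat d f (t n) (y n)) * X u
              + Amat d f (t n) (y n) * (X u - X (t n)) := by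
          rw [Matrix.sub_mul, Matrix.mul_sub]
          abel
        have hP1 : ‖Amat d f u (x u) * X u - Amat d f (t n) (y n) * X (t n)‖
            ≤ d * (M * (1 + M + C₁) * h) * KX + d * M * (LX * h) := by
          rw [hsplit1]
          refine le_trans (norm_add_le _ _) ?_
          have e1 : ‖(Amat d f u (x u) - Amat d f (t n) (y n)) * X u‖
              ≤ d * (M * (1 + M + C₁) * h) * KX := by
            refine le_trans (mnorm_mul_le _ _) ?_
            have e1a : (d:ℝ) * ‖Amat d f u (x u) - Amat d f (t n) (y n)‖
                ≤ d * (M * (1 + M + C₁) * h) := mul_le_mul_of_nonneg_left hAdiffb hd0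
            refine mul_le_mul e1a hXu (norm_nonneg _) ?_
            exact mul_nonneg hd0 (mul_nonneg (mul_nonneg hM0 (by linarith)) hh0.le)
          have e2 : ‖Amat d f (t n) (y n) * (X u - X (t n))‖ ≤ d * M * (LX * h) := by
            refine le_trans (mnorm_mul_le _ _) ?_
            have e2a : (d:ℝ) * ‖Amat d f (t n) (y n)‖ ≤ d * M :=
              mul_le_mul_of_nonneg_left hAn hd0
            exact mul_le_mul e2a hXd (norm_nonneg _) (mul_nonneg hd0 hM0)
          linarith
        have hidint : Amat d f u (x u) * X u + B u (x u)
            - (Amat d f (t n) (y n) * X (t n) + B (t n) (y n))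
            = (Amat d f u (x u) * X u - Amat d f (t n) (y n) * X (t n))
              + (B u (x u) - B (t n) (y n)) := by abel
        rw [hidint]
        refine le_trans (norm_add_le _ _) ?_
        rw [hC3def]
        linarith [hP1, hBdiffb]
      refine le_trans (intervalIntegral.norm_integral_le_of_norm_le_const hbnd) ?_
      rw [abs_of_nonneg hnn]
    -- T2 : exponential remainder
    have hT2 : ‖(NormedSpace.exp ((t (n + 1) - t n) • Amat d f (t n) (y n)) - 1
        - (t (n + 1) - t n) • Amat d f (t n) (y n)) * X (t n)‖
        ≤ d * EC2 * KX * (h * (t (n + 1) - t n)) := by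
      refine le_trans (mnorm_mul_le _ _) ?_
      have e1 : ‖NormedSpace.exp ((t (n + 1) - t n) • Amat d f (t n) (y n)) - 1
          - (t (n + 1) - t n) • Amat d f (t n) (y n)‖ ≤ (t (n + 1) - t n) ^ 2 * EC2 := by
        rw [hEC2def]
        exact mnorm_exp_smul_sub_one_sub_le (Amat d f (t n) (y n)) hd hAn hnn hle1
      have e2 : (d:ℝ) * ‖NormedSpace.exp ((t (n + 1) - t n) • Amat d f (t n) (y n)) - 1
          - (t (n + 1) - t n) • Amat d f (t n) (y n)‖ ≤ d * ((t (n + 1) - t n) ^ 2 * EC2) :=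
        mul_le_mul_of_nonneg_left e1 hd0
      have e3 : (d:ℝ) * ‖NormedSpace.exp ((t (n + 1) - t n) • Amat d f (t n) (y n)) - 1
          - (t (n + 1) - t n) • Amat d f (t n) (y n)‖ * ‖X (t n)‖
          ≤ (d * ((t (n + 1) - t n) ^ 2 * EC2)) * KX :=
        mul_le_mul e2 hXtn (norm_nonneg _)
          (mul_nonneg hd0 (mul_nonneg (sq_nonneg _) hEC20))
      refine le_trans e3 ?_
      have e4 : (t (n + 1) - t n) ^ 2 ≤ h * (t (n + 1) - t n) := by
        have := mul_le_mul_of_nonneg_right hleh hnn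
        nlinarith
      calc (d * ((t (n + 1) - t n) ^ 2 * EC2)) * KX
          = (d * EC2 * KX) * (t (n + 1) - t n) ^ 2 := by ring
        _ ≤ (d * EC2 * KX) * (h * (t (n + 1) - t n)) :=
            mul_le_mul_of_nonneg_left e4 (mul_nonneg (mul_nonneg hd0 hEC20) hKX0)
        _ = d * EC2 * KX * (h * (t (n + 1) - t n)) := by ring
    -- T3 : integral remainder
    have hexpc : ContinuousOn
        (fun u => NormedSpace.exp ((t (n + 1) - t n - u) • Amat d f (t n) (y n)))
        (Set.uIcc 0 (t (n + 1) - t n)) := by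
      refine (continuousOn_exp_smul (Amat d f (t n) (y n)) hd 1 zero_le_one).comp
        ((continuous_const.sub continuous_id).continuousOn) ?_
      intro u hu
      rw [Set.uIcc_of_le hnn] at hu
      constructor
      · show (-1:ℝ) ≤ t (n + 1) - t n - u
        linarith [hu.1, hu.2]
      · show t (n + 1) - t n - u ≤ (1:ℝ)
        linarith [hu.1, hu.2]
    have hIint : IntervalIntegrable (fun u =>
        NormedSpace.exp ((t (n + 1) - t n - u) • Amat d f (t n) (y n)) * B (t n) (y n))
        MeasureTheory.volume 0 (t (n + 1) - t n) :=
      ((continuous_matMul_right (B (t n) (y n))).comp_continuousOn hexpc).intervalIntegrable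
    have hT3 : ‖(∫ u in (0:ℝ)..(t (n + 1) - t n),
        NormedSpace.exp ((t (n + 1) - t n - u) • Amat d f (t n) (y n)) * B (t n) (y n))
        - (t (n + 1) - t n) • B (t n) (y n)‖
        ≤ d * EC * MB * (h * (t (n + 1) - t n)) := by
      have heq : (∫ u in (0:ℝ)..(t (n + 1) - t n),
          NormedSpace.exp ((t (n + 1) - t n - u) • Amat d f (t n) (y n)) * B (t n) (y n))
          - (t (n + 1) - t n) • B (t n) (y n)
          = ∫ u in (0:ℝ)..(t (n + 1) - t n),
            (NormedSpace.exp ((t (n + 1) - t n - u) • Amat d f (t n) (y n)) * B (t n) (y n)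
              - B (t n) (y n)) := by
        rw [intervalIntegral.integral_sub hIint intervalIntegrable_const,
          intervalIntegral.integral_const, sub_zero]
      rw [heq]
      have hbnd : ∀ u ∈ Set.uIoc (0:ℝ) (t (n + 1) - t n),
          ‖NormedSpace.exp ((t (n + 1) - t n - u) • Amat d f (t n) (y n)) * B (t n) (y n)
            - B (t n) (y n)‖ ≤ d * ((t (n + 1) - t n) * EC) * MB := by
        intro u hu
        rw [Set.uIoc_of_le hnn] at hu
        have hid : NormedSpace.exp ((t (n + 1) - t n - u) • Amat d f (t n) (y n)) * B (t n) (y n)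
            - B (t n) (y n)
            = (NormedSpace.exp ((t (n + 1) - t n - u) • Amat d f (t n) (y n)) - 1)
              * B (t n) (y n) := by
          rw [Matrix.sub_mul, Matrix.one_mul]
        rw [hid]
        refine le_trans (mnorm_mul_le _ _) ?_
        have hE1 : ‖NormedSpace.exp ((t (n + 1) - t n - u) • Amat d f (t n) (y n)) - 1‖
            ≤ (t (n + 1) - t n) * EC := by
          refine le_trans (mnorm_exp_smul_sub_one_le (Amat d f (t n) (y n)) hd hAn
            (s := t (n + 1) - t n - u) (by linarith [hu.1, hu.2]) (by linarith [hu.1])) ?_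
          rw [hECdef]
          refine mul_le_mul_of_nonneg_right (by linarith [hu.1]) ?_
          positivity
        have e1 : (d:ℝ) * ‖NormedSpace.exp ((t (n + 1) - t n - u) • Amat d f (t n) (y n)) - 1‖
            ≤ d * ((t (n + 1) - t n) * EC) := mul_le_mul_of_nonneg_left hE1 hd0
        exact mul_le_mul e1 hBnb (norm_nonneg _)
          (mul_nonneg hd0 (mul_nonneg hnn hEC0))
      refine le_trans (intervalIntegral.norm_integral_le_of_norm_le_const hbnd) ?_
      rw [sub_zero, abs_of_nonneg hnn]
      calc d * ((t (n + 1) - t n) * EC) * MB * (t (n + 1) - t n)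
          = (d * EC * MB) * ((t (n + 1) - t n) * (t (n + 1) - t n)) := by ring
        _ ≤ (d * EC * MB) * (h * (t (n + 1) - t n)) := by
            refine mul_le_mul_of_nonneg_left ?_
              (mul_nonneg (mul_nonneg hd0 hEC0) hMB0)
            exact mul_le_mul_of_nonneg_right hleh hnn
        _ = d * EC * MB * (h * (t (n + 1) - t n)) := by ring
    -- structural identity
    have hidY : X (t (n + 1)) - Y (n + 1)
        = NormedSpace.exp ((t (n + 1) - t n) • Amat d f (t n) (y n)) * (X (t n) - Y n)
          + ((X (t (n + 1)) - X (t n)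
              - (t (n + 1) - t n) • (Amat d f (t n) (y n) * X (t n) + B (t n) (y n)))
            - ((NormedSpace.exp ((t (n + 1) - t n) • Amat d f (t n) (y n)) - 1
                - (t (n + 1) - t n) • Amat d f (t n) (y n)) * X (t n))
            - ((∫ u in (0:ℝ)..(t (n + 1) - t n),
                NormedSpace.exp ((t (n + 1) - t n - u) • Amat d f (t n) (y n)) * B (t n) (y n))
              - (t (n + 1) - t n) • B (t n) (y n))) := by
      rw [hYrec n hn]
      rw [Matrix.mul_sub, Matrix.sub_mul, Matrix.sub_mul, Matrix.one_mul,
        smul_add, Matrix.smul_mul]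
      abel
    -- contraction factor
    have hfac : ‖NormedSpace.exp ((t (n + 1) - t n) • Amat d f (t n) (y n))
        * (X (t n) - Y n)‖ ≤ (1 + L2 * (t (n + 1) - t n)) * ‖X (t n) - Y n‖ := by
      have hid2 : NormedSpace.exp ((t (n + 1) - t n) • Amat d f (t n) (y n)) * (X (t n) - Y n)
          = (X (t n) - Y n)
            + (NormedSpace.exp ((t (n + 1) - t n) • Amat d f (t n) (y n)) - 1)
              * (X (t n) - Y n) := by
        rw [Matrix.sub_mul, Matrix.one_mul]
        abel
      rw [hid2]
      refine le_trans (norm_add_le _ _) ?_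
      have hE1 : ‖NormedSpace.exp ((t (n + 1) - t n) • Amat d f (t n) (y n)) - 1‖
          ≤ (t (n + 1) - t n) * EC := by
        refine le_trans (mnorm_exp_smul_sub_one_le (Amat d f (t n) (y n)) hd hAn hnn hle1) ?_
        rw [hECdef]
      have e1 : ‖(NormedSpace.exp ((t (n + 1) - t n) • Amat d f (t n) (y n)) - 1)
          * (X (t n) - Y n)‖ ≤ d * ((t (n + 1) - t n) * EC) * ‖X (t n) - Y n‖ := by
        refine le_trans (mnorm_mul_le _ _) ?_
        exact mul_le_mul_of_nonneg_right
          (mul_le_mul_of_nonneg_left hE1 hd0) (norm_nonneg _)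
      rw [hL2def]
      linarith [e1, norm_nonneg (X (t n) - Y n)]
    rw [hidY]
    refine le_trans (norm_add_le _ _) ?_
    have htail : ‖(X (t (n + 1)) - X (t n)
          - (t (n + 1) - t n) • (Amat d f (t n) (y n) * X (t n) + B (t n) (y n)))
        - ((NormedSpace.exp ((t (n + 1) - t n) • Amat d f (t n) (y n)) - 1
            - (t (n + 1) - t n) • Amat d f (t n) (y n)) * X (t n))
        - ((∫ u in (0:ℝ)..(t (n + 1) - t n),
            NormedSpace.exp ((t (n + 1) - t n - u) • Amat d f (t n) (y n)) * B (t n) (y n))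
          - (t (n + 1) - t n) • B (t n) (y n))‖ ≤ (CR * h) * (t (n + 1) - t n) := by
      refine le_trans (norm_sub_le _ _) ?_
      have h1 := norm_sub_le (X (t (n + 1)) - X (t n)
          - (t (n + 1) - t n) • (Amat d f (t n) (y n) * X (t n) + B (t n) (y n)))
        ((NormedSpace.exp ((t (n + 1) - t n) • Amat d f (t n) (y n)) - 1
            - (t (n + 1) - t n) • Amat d f (t n) (y n)) * X (t n))
      rw [hCRdef, hL2def]
      linarith [hT1, hT2, hT3]
    linarith [hfac, htail]
  -- conclude by discrete Gronwall
  have hEY0 : ‖X (t 0) - Y 0‖ = 0 := by rw [ht0, hX₀, hY0]; simp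
  have hfin := discrete_gronwall' L2 (CR * h) hL20 (mul_nonneg hCR0 hh0.le) N t
    (fun n => ‖X (t n) - Y n‖) hmono' hEY0 (fun n => norm_nonneg _) hEYstep
  intro n hn
  refine le_trans (hfin n hn) ?_
  have h1 : t n - t 0 ≤ T := htT n hn
  have h2 : 0 ≤ t n - t 0 := htT0 n hn
  have h3 : Real.exp (L2 * (t n - t 0)) ≤ Real.exp (L2 * T) :=
    Real.exp_le_exp.mpr (mul_le_mul_of_nonneg_left h1 hL20)
  have h4 : (0 : ℝ) < Real.exp (L2 * (t n - t 0)) := Real.exp_pos _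
  have h5 : (0 : ℝ) < Real.exp (L2 * T) := Real.exp_pos _
  calc CR * h * (t n - t 0) * Real.exp (L2 * (t n - t 0))
      ≤ CR * h * T * Real.exp (L2 * (t n - t 0)) := by
        exact mul_le_mul_of_nonneg_right
          (mul_le_mul_of_nonneg_left h1 (mul_nonneg hCR0 hh0.le)) h4.le
    _ ≤ CR * h * T * Real.exp (L2 * T) :=
        mul_le_mul_of_nonneg_left h3 (mul_nonneg (mul_nonneg hCR0 hh0.le) hT.le)
    _ = (CR * T * Real.exp (L2 * T)) * h := by ring
    _ ≤ (CR * T * Real.exp (L2 * T) + 1) * h :=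
        mul_le_mul_of_nonneg_right (by linarith) hh0.le
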